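/- Let X be a discrete metric space with bounded geometry, S > R > 0, and suppose diagonal isometries V, W : ℓ²(X) → ℓ²(X) ⊗ ℂⁿ satisfy V δ_x, W δ_x ∈ ℂδ_x ⊗ ℂⁿ for all x. If a ∈ B(ℓ²(X) ⊗ ℂⁿ) has propagation at most R (viewing matrix entries in B(ℂⁿ)), then W* a V has propagation at most R, and ‖ψ_S(W* a V)‖ ≤ ‖ψ_S^{(n)}(a)‖, where ψ_S^{(n)} = ψ_S ⊗ id_{M_n} is the amplified compression map. -/

import Mathlib

set_option maxHeartbeats 1000000
set_option synthInstance.maxHeartbeats 400000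


/- ℓ²(X, H) is modeled as `lp (fun _ : X => H) 2`; `delta x` is the standard
basis vector δ_x of ℓ²(X) = ℓ²(X, ℂ); `projSet s` is the orthogonal projection
of ℓ²(X, H) onto the coordinates in the finite set `s` (for a ball `N(x,S)` this
is the projection `P_x` onto ℓ²(N(x,S))).  The matrix coefficient
a_{y,z} = ⟨a δ_z, δ_y⟩ (linear in the first variable, as in the paper) is
`⟪delta y, a (delta z)⟫_ℂ` in Mathlib's convention (conjugate-linear in the
first slot), and the mathematicians' inner product ⟨u, v⟩ is `⟪v, u⟫_ℂ`. -/

noncomputable section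
open scoped InnerProductSpace ComplexOrder ENNReal

attribute [local instance] Classical.propDecidable

abbrev l2 (X : Type*) (H : Type*) [NormedAddCommGroup H] [InnerProductSpace ℂ H] :
    Type _ := lp (fun _ : X => H) 2

variable {X : Type*} {H : Type*} [NormedAddCommGroup H] [InnerProductSpace ℂ H]

/-- standard basis vector δ_x of ℓ²(X). -/
def delta (x : X) : l2 X ℂ := lp.single 2 x 1

/-- evaluation at a point, as a continuous linear map ℓ²(X,H) → H. -/
def evalCLM (x : X) : l2 X H →L[ℂ] H :=
  LinearMap.mkContinuous
    { toFun := fun f => f x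
      map_add' := fun f g => by simp [lp.coeFn_add]
      map_smul' := fun c f => by simp [lp.coeFn_smul] }
    1 (fun f => by
      show ‖f x‖ ≤ 1 * ‖f‖
      simpa using lp.norm_apply_le_norm (by norm_num) f x)

/-- insertion at a point, as a continuous linear map H → ℓ²(X,H). -/
def singleCLM (x : X) : H →L[ℂ] l2 X H :=
  LinearMap.mkContinuous
    { toFun := fun v => lp.single 2 x v
      map_add' := fun v w => by
        apply lp.ext
        funext j
        by_cases h : j = x
        · subst h; simp [lp.single_apply_self, lp.coeFn_add]
        · simp [lp.single_apply_ne 2 x _ h, lp.coeFn_add]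
      map_smul' := fun c v => by simpa using lp.single_smul 2 x v c }
    1 (fun v => by
      have : ‖(lp.single 2 x v : l2 X H)‖ = ‖v‖ := by
        simpa using lp.norm_single (p := 2) (by norm_num) (fun _ : X => v) x
      simp [this])

/-- orthogonal projection of ℓ²(X,H) onto the coordinates in a finite set. -/
def projSet (s : Finset X) : l2 X H →L[ℂ] l2 X H :=
  ∑ y ∈ s, (singleCLM y) ∘L (evalCLM y)

-- ====== aux lemmas ======
lemma evalCLM_apply (x : X) (f : l2 X H) : evalCLM x f = f x := rfl

lemma singleCLM_apply (x : X) (v : H) : singleCLM x v = lp.single 2 x v := rfl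

lemma norm_single' (x : X) (v : H) : ‖(lp.single 2 x v : l2 X H)‖ = ‖v‖ := by
  simpa using lp.norm_single (p := 2) (by norm_num) (fun _ : X => v) x

lemma projSet_eq_sum (s : Finset X) (f : l2 X H) :
    projSet s f = ∑ z ∈ s, lp.single 2 z (f z) := by
  simp [projSet, ContinuousLinearMap.sum_apply, singleCLM_apply, evalCLM_apply]

lemma projSet_apply_coe (s : Finset X) (f : l2 X H) (y : X) :
    (projSet s f : ∀ _, H) y = if y ∈ s then f y else 0 := by
  rw [projSet_eq_sum, lp.coeFn_sum, Finset.sum_apply]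
  by_cases hy : y ∈ s
  · rw [if_pos hy]
    refine (Finset.sum_eq_single_of_mem y hy fun z _ hzy => ?_).trans
      (lp.single_apply_self (E := fun _ : X => H) 2 y (f y))
    exact lp.single_apply_ne (E := fun _ : X => H) 2 z _ (Ne.symm hzy)
  · rw [if_neg hy]
    exact Finset.sum_eq_zero fun z hz =>
      lp.single_apply_ne (E := fun _ : X => H) 2 z _ (fun h => hy (by rw [h]; exact hz))

lemma projSet_single (s : Finset X) {y : X} (hy : y ∈ s) (v : H) :
    projSet s (lp.single 2 y v) = lp.single 2 y v := by
  apply lp.ext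
  funext z
  rw [projSet_apply_coe]
  by_cases hz : z ∈ s
  · rw [if_pos hz]
  · rw [if_neg hz,
      lp.single_apply_ne (E := fun _ : X => H) 2 y v (fun h => hz (by rw [h]; exact hy))]

lemma projSet_idem (s : Finset X) (f : l2 X H) :
    projSet s (projSet s f) = projSet s f := by
  rw [projSet_eq_sum s f, map_sum]
  exact Finset.sum_congr rfl fun z hz => projSet_single s hz _

lemma norm_projSet_apply_le (s : Finset X) (f : l2 X H) : ‖projSet s f‖ ≤ ‖f‖ := by
  have horth : ⟪projSet s f, f - projSet s f⟫_ℂ = 0 := by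
    rw [lp.inner_eq_tsum]
    refine (tsum_congr (g := fun _ : X => (0 : ℂ)) fun y => ?_).trans tsum_zero
    rcases eq_or_ne ((projSet s f : ∀ _, H) y) 0 with h | h
    · rw [h, inner_zero_left]
    · have hy : y ∈ s := by
        by_contra hy
        exact h (by rw [projSet_apply_coe, if_neg hy])
      have h2 : (f - projSet s f : ∀ _, H) y = 0 := by
        rw [lp.coeFn_sub, Pi.sub_apply, projSet_apply_coe, if_pos hy, sub_self]
      rw [h2, inner_zero_right]
  have key : ‖f‖ ^ 2 = ‖projSet s f‖ ^ 2 + ‖f - projSet s f‖ ^ 2 := by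
    have := norm_add_sq (𝕜 := ℂ) (projSet s f) (f - projSet s f)
    simp only [horth, map_zero, mul_zero, add_zero, zero_mul] at this
    simpa [add_sub_cancel] using this
  nlinarith [norm_nonneg (projSet s f), norm_nonneg f, norm_nonneg (f - projSet s f)]

lemma norm_projSet_le (s : Finset X) : ‖(projSet s : l2 X H →L[ℂ] l2 X H)‖ ≤ 1 :=
  ContinuousLinearMap.opNorm_le_bound _ zero_le_one fun f => by
    simpa using norm_projSet_apply_le s f

variable [CompleteSpace H]

lemma adjoint_singleCLM (x : X) :
    ContinuousLinearMap.adjoint (singleCLM x : H →L[ℂ] l2 X H) = evalCLM x := by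
  symm
  rw [ContinuousLinearMap.eq_adjoint_iff]
  exact fun f v => (lp.inner_single_right x v f).symm

lemma adjoint_projSet (s : Finset X) :
    ContinuousLinearMap.adjoint (projSet s : l2 X H →L[ℂ] l2 X H) = projSet s := by
  rw [projSet, map_sum]
  refine Finset.sum_congr rfl fun y _ => ?_
  rw [ContinuousLinearMap.adjoint_comp, adjoint_singleCLM, ← adjoint_singleCLM y,
    ContinuousLinearMap.adjoint_adjoint]

-- main theorem part, to append after aux lemmas
section Main

lemma norm_proj_comp_le {X H : Type*} [NormedAddCommGroup H] [InnerProductSpace ℂ H]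
    (s : Finset X) (b : l2 X H →L[ℂ] l2 X H) :
    ‖projSet s ∘L b ∘L projSet s‖ ≤ ‖b‖ := by
  calc ‖projSet s ∘L b ∘L projSet s‖
      ≤ ‖(projSet s : l2 X H →L[ℂ] l2 X H)‖ * ‖b ∘L projSet s‖ :=
        ContinuousLinearMap.opNorm_comp_le _ _
    _ ≤ 1 * ‖b ∘L projSet s‖ :=
        mul_le_mul_of_nonneg_right (norm_projSet_le s) (ContinuousLinearMap.opNorm_nonneg _)
    _ = ‖b ∘L projSet s‖ := one_mul _
    _ ≤ ‖b‖ * ‖(projSet s : l2 X H →L[ℂ] l2 X H)‖ := ContinuousLinearMap.opNorm_comp_le _ _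
    _ ≤ ‖b‖ * 1 := mul_le_mul_of_nonneg_left (norm_projSet_le s) (ContinuousLinearMap.opNorm_nonneg _)
    _ = ‖b‖ := mul_one _

lemma comp_projSet_eq {X : Type*} {E' : Type*} [NormedAddCommGroup E']
    [InnerProductSpace ℂ E']
    (V : l2 X ℂ →L[ℂ] l2 X E') (hV : ∀ x : X, ∃ η : E', V (delta x) = lp.single 2 x η)
    (s : Finset X) (f : l2 X ℂ) :
    projSet s (V (projSet s f)) = V (projSet s f) := by
  rw [projSet_eq_sum s f, map_sum, map_sum]
  refine Finset.sum_congr rfl fun y hy => ?_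
  obtain ⟨η, hη⟩ := hV y
  have h1 : (lp.single 2 y (f y) : l2 X ℂ) = f y • delta y := by
    rw [delta, ← lp.single_smul, smul_eq_mul, mul_one]
  rw [h1, map_smul, hη, map_smul, projSet_single s hy]

/-- compressing an operator a on ℓ²(X, ℂⁿ) of propagation ≤ R by
diagonal isometries V, W yields W* a V of propagation ≤ R on ℓ²(X) with
‖ψ_S(W* a V)‖ ≤ ‖ψ_S⁽ⁿ⁾(a)‖ (both norms being the sup over x of the norms of the
compressions to the closed S-balls). -/
theorem stmt14 {X : Type*} [MetricSpace X]
    (hfin : ∀ (x : X) (r : ℝ), (Metric.closedBall x r).Finite)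
    (n : ℕ) (R S : ℝ) (hR : 0 < R) (hRS : R < S)
    (V W : l2 X ℂ →L[ℂ] l2 X (EuclideanSpace ℂ (Fin n)))
    (hViso : Isometry V) (hWiso : Isometry W)
    (hV : ∀ x : X, ∃ η : EuclideanSpace ℂ (Fin n), V (delta x) = lp.single 2 x η)
    (hW : ∀ x : X, ∃ η : EuclideanSpace ℂ (Fin n), W (delta x) = lp.single 2 x η)
    (a : l2 X (EuclideanSpace ℂ (Fin n)) →L[ℂ] l2 X (EuclideanSpace ℂ (Fin n)))
    (hprop : ∀ y z : X, R < dist y z → ∀ v : EuclideanSpace ℂ (Fin n),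
      (a (lp.single 2 z v) : ∀ _ : X, EuclideanSpace ℂ (Fin n)) y = 0) :
    (∀ y z : X, R < dist y z →
      ⟪delta y, ((ContinuousLinearMap.adjoint W) ∘L a ∘L V) (delta z)⟫_ℂ = 0) ∧
    (⨆ x : X, ‖projSet (hfin x S).toFinset ∘L
        ((ContinuousLinearMap.adjoint W) ∘L a ∘L V) ∘L projSet (hfin x S).toFinset‖) ≤
      ⨆ x : X, ‖projSet (hfin x S).toFinset ∘L a ∘L projSet (hfin x S).toFinset‖ := by
  constructor
  · intro y z hd
    obtain ⟨η₁, hη₁⟩ := hV z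
    obtain ⟨η₂, hη₂⟩ := hW y
    have h1 : ⟪delta y, ((ContinuousLinearMap.adjoint W) ∘L a ∘L V) (delta z)⟫_ℂ
        = ⟪W (delta y), a (V (delta z))⟫_ℂ :=
      ContinuousLinearMap.adjoint_inner_right W _ _
    rw [h1, hη₂, hη₁, lp.inner_single_left, hprop y z hd η₁, inner_zero_right]
  · have hWn : ‖W‖ ≤ 1 := ContinuousLinearMap.opNorm_le_bound _ zero_le_one fun f => by
      rw [(AddMonoidHomClass.isometry_iff_norm W).mp hWiso f, one_mul]
    have hVn : ‖V‖ ≤ 1 := ContinuousLinearMap.opNorm_le_bound _ zero_le_one fun f => by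
      rw [(AddMonoidHomClass.isometry_iff_norm V).mp hViso f, one_mul]
    have key : ∀ x : X,
        ‖projSet (hfin x S).toFinset ∘L
          ((ContinuousLinearMap.adjoint W) ∘L a ∘L V) ∘L projSet (hfin x S).toFinset‖ ≤
        ‖projSet (hfin x S).toFinset ∘L a ∘L projSet (hfin x S).toFinset‖ := by
      intro x
      set s : Finset X := (hfin x S).toFinset with hs
      set P : l2 X ℂ →L[ℂ] l2 X ℂ := projSet s with hP
      set Q : l2 X (EuclideanSpace ℂ (Fin n)) →L[ℂ] l2 X (EuclideanSpace ℂ (Fin n)) :=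
        projSet s with hQ
      have hQV : ∀ f, Q (V (P f)) = V (P f) := comp_projSet_eq V hV s
      have h3 : Q ∘L (W ∘L P) = W ∘L P :=
        ContinuousLinearMap.ext (comp_projSet_eq W hW s)
      have h5 := congrArg ContinuousLinearMap.adjoint h3
      simp only [hP, hQ, ContinuousLinearMap.adjoint_comp, adjoint_projSet] at h5
      have h4 : ∀ g, P ((ContinuousLinearMap.adjoint W) (Q g))
          = P ((ContinuousLinearMap.adjoint W) g) := fun g => DFunLike.congr_fun h5 g
      have hop : P ∘L ((ContinuousLinearMap.adjoint W) ∘L a ∘L V) ∘L P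
          = (P ∘L (ContinuousLinearMap.adjoint W)) ∘L ((Q ∘L a ∘L Q) ∘L (V ∘L P)) := by
        refine ContinuousLinearMap.ext fun f => ?_
        show P ((ContinuousLinearMap.adjoint W) (a (V (P f))))
          = P ((ContinuousLinearMap.adjoint W) (Q (a (Q (V (P f))))))
        rw [hQV f, h4 (a (V (P f)))]
      have hPWn : ‖P ∘L (ContinuousLinearMap.adjoint W)‖ ≤ 1 := by
        have h6 : ‖ContinuousLinearMap.adjoint W‖ = ‖W‖ :=
          ContinuousLinearMap.adjoint.norm_map W
        refine le_trans (ContinuousLinearMap.opNorm_comp_le _ _) ?_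
        have := norm_projSet_le (H := ℂ) (X := X) s
        rw [h6]
        nlinarith [ContinuousLinearMap.opNorm_nonneg
          (ContinuousLinearMap.adjoint W), norm_nonneg W]
      have hVPn : ‖V ∘L P‖ ≤ 1 := by
        refine le_trans (ContinuousLinearMap.opNorm_comp_le _ _) ?_
        have := norm_projSet_le (H := ℂ) (X := X) s
        nlinarith [ContinuousLinearMap.opNorm_nonneg V, ContinuousLinearMap.opNorm_nonneg P]
      calc ‖P ∘L ((ContinuousLinearMap.adjoint W) ∘L a ∘L V) ∘L P‖
          = ‖(P ∘L (ContinuousLinearMap.adjoint W)) ∘L ((Q ∘L a ∘L Q) ∘L (V ∘L P))‖ := by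
            rw [hop]
        _ ≤ ‖P ∘L (ContinuousLinearMap.adjoint W)‖ * ‖(Q ∘L a ∘L Q) ∘L (V ∘L P)‖ :=
            ContinuousLinearMap.opNorm_comp_le _ _
        _ ≤ ‖P ∘L (ContinuousLinearMap.adjoint W)‖ * (‖Q ∘L a ∘L Q‖ * ‖V ∘L P‖) := by
            exact mul_le_mul_of_nonneg_left (ContinuousLinearMap.opNorm_comp_le _ _)
              (ContinuousLinearMap.opNorm_nonneg _)
        _ ≤ 1 * (‖Q ∘L a ∘L Q‖ * 1) :=
            mul_le_mul hPWn (mul_le_mul_of_nonneg_left hVPn (ContinuousLinearMap.opNorm_nonneg _))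
              (mul_nonneg (ContinuousLinearMap.opNorm_nonneg _)
                (ContinuousLinearMap.opNorm_nonneg _)) zero_le_one
        _ = ‖Q ∘L a ∘L Q‖ := by ring
    have hbdd : BddAbove (Set.range fun x : X =>
        ‖projSet (hfin x S).toFinset ∘L a ∘L projSet (hfin x S).toFinset‖) := by
      refine ⟨‖a‖, fun r hr => ?_⟩
      obtain ⟨x, rfl⟩ := hr
      exact norm_proj_comp_le _ a
    rcases isEmpty_or_nonempty X with hX | hX
    · simp [Real.iSup_of_isEmpty]
    · exact ciSup_le fun x => (key x).trans (le_ciSup hbdd x)
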